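/- Alternative representation of a full-data mean under coarsening at random (basis of the TMLE of Section 5 and the EEE estimator): assume Δ and X are conditionally independent given σ(V) (coarsening at random), π₀∘V is a version of μ[Δ | σ(V)] with π₀∘V > 0 μ-a.e., and m : 𝒱 → ℝ is measurable with (π₀∘V)·(m∘V) a version of μ[Δ·f(X) | σ(V)] (i.e., m is a version of the regression E[f(X) | Δ = 1, V]). If f(X) and m(V) are integrable, then ∫ m(V) dμ = ∫ f(X) dμ. -/

import Mathlib

open MeasureTheory ProbabilityTheory

open scoped ENNReal NNReal

/-- Auxiliary: the conditional-independence product identity and cancellation argument,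
with the conditioning σ-algebra abstract. -/
theorem eee_aux {Ω 𝒱 𝒳 : Type*} (m' : MeasurableSpace Ω)
    {mΩ : MeasurableSpace Ω} [StandardBorelSpace Ω]
    [MeasurableSpace 𝒱] [MeasurableSpace 𝒳]
    (μ : Measure Ω) [IsProbabilityMeasure μ] (hm' : m' ≤ mΩ)
    (Δ : Ω → ℝ) (hΔ : Measurable Δ) (hΔ01 : ∀ ω, Δ ω = 0 ∨ Δ ω = 1)
    (V : Ω → 𝒱) (hV : Measurable V)
    (X : Ω → 𝒳) (hX : Measurable X)
    (π₀ m : 𝒱 → ℝ) (hπ₀ : Measurable π₀) (hm : Measurable m)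
    (hh_meas' : Measurable[m'] fun ω => π₀ (V ω))
    (f : 𝒳 → ℝ) (hf : Measurable f)
    (hCAR : CondIndepFun m' hm' Δ X μ)
    (hver : (fun ω => π₀ (V ω)) =ᵐ[μ] μ[Δ | m'])
    (hpos : ∀ᵐ ω ∂μ, 0 < π₀ (V ω))
    (hreg : (fun ω => π₀ (V ω) * m (V ω)) =ᵐ[μ] μ[fun ω => Δ ω * f (X ω) | m'])
    (hfint : Integrable (fun ω => f (X ω)) μ)
    (hmint : Integrable (fun ω => m (V ω)) μ) :
    ∫ ω, m (V ω) ∂μ = ∫ ω, f (X ω) ∂μ := by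
  set h : Ω → ℝ := fun ω => π₀ (V ω) with hhdef
  set g : Ω → ℝ := fun ω => f (X ω) with hgdef
  have hh_meas : Measurable h := hπ₀.comp hV
  have hg_meas : Measurable g := hf.comp hX
  -- Δ is bounded by 1, in particular 0 ≤ Δ ≤ 1
  have hΔ_nonneg : ∀ ω, 0 ≤ Δ ω := fun ω => by rcases hΔ01 ω with h1 | h1 <;> simp [h1]
  have hΔ_le_one : ∀ ω, Δ ω ≤ 1 := fun ω => by rcases hΔ01 ω with h1 | h1 <;> simp [h1]
  have hΔint : Integrable Δ μ := by
    refine (integrable_const (1 : ℝ)).mono' hΔ.aestronglyMeasurable ?_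
    filter_upwards with ω
    rw [Real.norm_eq_abs, abs_of_nonneg (hΔ_nonneg ω)]
    exact hΔ_le_one ω
  -- a.e. bounds on h
  have hh_nonneg : ∀ᵐ ω ∂μ, 0 ≤ h ω := hpos.mono fun ω hω => le_of_lt hω
  have hh_le_one : ∀ᵐ ω ∂μ, h ω ≤ 1 := by
    have h1 : μ[Δ | m'] ≤ᵐ[μ] μ[fun _ => (1:ℝ) | m'] :=
      condExp_mono hΔint (integrable_const 1) (Filter.Eventually.of_forall hΔ_le_one)
    rw [condExp_const hm'] at h1
    filter_upwards [hver, h1] with ω h2 h3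
    rw [h2]; exact h3
  have hh_int : Integrable h μ := integrable_condExp.congr hver.symm
  -- Δ as an indicator
  have hA_meas : MeasurableSet (Δ ⁻¹' {1}) := hΔ (measurableSet_singleton 1)
  have hΔ_ind : (Δ ⁻¹' {1}).indicator (fun _ => (1:ℝ)) = Δ := by
    funext ω
    rcases hΔ01 ω with h1 | h1 <;> simp [Set.indicator, h1]
  -- Key set identity from CAR
  have key : ∀ s : Set Ω, MeasurableSet[m'] s → ∀ t : Set 𝒳, MeasurableSet t →
      ∫ ω in s ∩ X ⁻¹' t, Δ ω ∂μ = ∫ ω in s ∩ X ⁻¹' t, h ω ∂μ := by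
    intro s hs t ht
    have hsΩ : MeasurableSet s := hm' s hs
    have htΩ : MeasurableSet (X ⁻¹' t) := hX ht
    have hCAR' := (condIndepFun_iff_condExp_inter_preimage_eq_mul (m' := m') (hm' := hm')
      hΔ hX).mp hCAR {1} t (measurableSet_singleton 1) ht
    have hind_int : ∀ u : Set Ω, MeasurableSet u →
        Integrable (u.indicator fun _ => (1:ℝ)) μ :=
      fun u hu => (integrable_const (1:ℝ)).indicator hu
    have hAeq : μ[(Δ ⁻¹' {1}).indicator fun _ => (1:ℝ) | m'] = μ[Δ | m'] := by
      rw [hΔ_ind]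
    have hprod_asm : AEStronglyMeasurable (h * (X ⁻¹' t).indicator fun _ => (1:ℝ)) μ := by
      exact (hh_meas.mul ((measurable_const (a := (1:ℝ))).indicator htΩ)).aestronglyMeasurable
    have hprod_int : Integrable (h * (X ⁻¹' t).indicator fun _ => (1:ℝ)) μ := by
      refine (integrable_const (1 : ℝ)).mono' hprod_asm ?_
      filter_upwards [hh_nonneg, hh_le_one] with ω h0 h1
      rw [Pi.mul_apply, Real.norm_eq_abs, abs_mul]
      calc |h ω| * |(X ⁻¹' t).indicator (fun _ => (1:ℝ)) ω|
          ≤ 1 * 1 := by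
            apply mul_le_mul
            · rw [abs_of_nonneg h0]; exact h1
            · rcases Set.indicator_eq_zero_or_self (X ⁻¹' t) (fun _ => (1:ℝ)) ω with h2 | h2 <;>
                rw [h2] <;> simp
            · exact abs_nonneg _
            · exact zero_le_one
        _ = 1 := one_mul 1
    have hpull : μ[h * (X ⁻¹' t).indicator fun _ => (1:ℝ) | m']
        =ᵐ[μ] h * μ[(X ⁻¹' t).indicator fun _ => (1:ℝ) | m'] :=
      condExp_mul_of_stronglyMeasurable_left (Measurable.stronglyMeasurable hh_meas')
        hprod_int (hind_int _ htΩ)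
    calc ∫ ω in s ∩ X ⁻¹' t, Δ ω ∂μ
        = ∫ ω in s, (X ⁻¹' t).indicator Δ ω ∂μ := (setIntegral_indicator htΩ).symm
      _ = ∫ ω in s, (Δ ⁻¹' {1} ∩ X ⁻¹' t).indicator (fun _ => (1:ℝ)) ω ∂μ := by
          refine setIntegral_congr_fun hsΩ fun ω _ => ?_
          by_cases hω : ω ∈ X ⁻¹' t
          · rcases hΔ01 ω with h1 | h1 <;>
              simp [Set.indicator, hω, h1]
          · simp [Set.indicator, hω]
      _ = ∫ ω in s, (μ[(Δ ⁻¹' {1} ∩ X ⁻¹' t).indicator fun _ => (1:ℝ) | m']) ω ∂μ :=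
          (setIntegral_condExp hm' (hind_int _ (hA_meas.inter htΩ)) hs).symm
      _ = ∫ ω in s, (h * (μ[(X ⁻¹' t).indicator fun _ => (1:ℝ) | m'])) ω ∂μ := by
          refine setIntegral_congr_ae hsΩ ?_
          filter_upwards [hCAR', hver] with ω h1 h2 _
          rw [h1, Pi.mul_apply, hAeq, ← h2]
      _ = ∫ ω in s, (μ[h * (X ⁻¹' t).indicator fun _ => (1:ℝ) | m']) ω ∂μ := by
          refine setIntegral_congr_ae hsΩ ?_
          filter_upwards [hpull] with ω h1 _
          rw [h1]
      _ = ∫ ω in s, (h * (X ⁻¹' t).indicator fun _ => (1:ℝ)) ω ∂μ :=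
          setIntegral_condExp hm' hprod_int hs
      _ = ∫ ω in s, (X ⁻¹' t).indicator h ω ∂μ := by
          refine setIntegral_congr_fun hsΩ fun ω _ => ?_
          by_cases hω : ω ∈ X ⁻¹' t <;> simp [Set.indicator, hω]
      _ = ∫ ω in s ∩ X ⁻¹' t, h ω ∂μ := setIntegral_indicator htΩ
  -- upgrade to general f via equality of image measures
  have key2 : ∀ s : Set Ω, MeasurableSet[m'] s →
      ∫ ω in s, Δ ω * g ω ∂μ = ∫ ω in s, h ω * g ω ∂μ := by
    intro s hs
    have hsΩ : MeasurableSet s := hm' s hs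
    set κ₁ : Measure 𝒳 :=
      Measure.map X ((μ.restrict s).withDensity fun ω => ((Δ ω).toNNReal : ℝ≥0∞)) with hκ₁
    set κ₂ : Measure 𝒳 :=
      Measure.map X ((μ.restrict s).withDensity fun ω => ((h ω).toNNReal : ℝ≥0∞)) with hκ₂
    have hκeq : κ₁ = κ₂ := by
      ext t ht
      rw [hκ₁, hκ₂, Measure.map_apply hX ht, Measure.map_apply hX ht,
        withDensity_apply _ (hX ht), withDensity_apply _ (hX ht),
        Measure.restrict_restrict (hX ht)]
      have e1 : ∫⁻ ω in X ⁻¹' t ∩ s, ((Δ ω).toNNReal : ℝ≥0∞) ∂μ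
          = ENNReal.ofReal (∫ ω in X ⁻¹' t ∩ s, Δ ω ∂μ) :=
        (ofReal_integral_eq_lintegral_ofReal (hΔint.integrableOn)
          (Filter.Eventually.of_forall fun ω => hΔ_nonneg ω)).symm
      have e2 : ∫⁻ ω in X ⁻¹' t ∩ s, ((h ω).toNNReal : ℝ≥0∞) ∂μ
          = ENNReal.ofReal (∫ ω in X ⁻¹' t ∩ s, h ω ∂μ) :=
        (ofReal_integral_eq_lintegral_ofReal (hh_int.integrableOn)
          (ae_restrict_of_ae hh_nonneg)).symm
      rw [e1, e2, Set.inter_comm, key s hs t ht]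
    have i1 : ∫ y, f y ∂κ₁ = ∫ ω in s, Δ ω * g ω ∂μ := by
      rw [hκ₁, integral_map hX.aemeasurable hf.aestronglyMeasurable,
        integral_withDensity_eq_integral_smul (hΔ.real_toNNReal)]
      refine setIntegral_congr_fun hsΩ fun ω _ => ?_
      rw [NNReal.smul_def]
      simp [Real.coe_toNNReal _ (hΔ_nonneg ω), hgdef]
    have i2 : ∫ y, f y ∂κ₂ = ∫ ω in s, h ω * g ω ∂μ := by
      rw [hκ₂, integral_map hX.aemeasurable hf.aestronglyMeasurable,
        integral_withDensity_eq_integral_smul (hh_meas.real_toNNReal)]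
      refine setIntegral_congr_ae hsΩ ?_
      filter_upwards [hh_nonneg] with ω h0 _
      rw [NNReal.smul_def]
      simp [Real.coe_toNNReal _ h0, hgdef]
    rw [← i1, ← i2, hκeq]
  -- conditional expectation product rule
  have hΔg_int : Integrable (fun ω => Δ ω * g ω) μ := by
    refine (hfint.norm).mono' ((hΔ.mul hg_meas).aestronglyMeasurable) ?_
    filter_upwards with ω
    rw [Real.norm_eq_abs, abs_mul]
    calc |Δ ω| * |g ω| ≤ 1 * |g ω| := by
          apply mul_le_mul_of_nonneg_right _ (abs_nonneg _)
          rw [abs_of_nonneg (hΔ_nonneg ω)]; exact hΔ_le_one ω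
      _ = ‖g ω‖ := by rw [one_mul, Real.norm_eq_abs]
  have hhg_int : Integrable (h * g) μ := by
    have hasm : AEStronglyMeasurable (h * g) μ := by
      exact (hh_meas.mul hg_meas).aestronglyMeasurable
    refine (hfint.norm).mono' hasm ?_
    filter_upwards [hh_nonneg, hh_le_one] with ω h0 h1
    rw [Pi.mul_apply, Real.norm_eq_abs, abs_mul]
    calc |h ω| * |g ω| ≤ 1 * |g ω| := by
          apply mul_le_mul_of_nonneg_right _ (abs_nonneg _)
          rw [abs_of_nonneg h0]; exact h1
      _ = ‖g ω‖ := by rw [one_mul, Real.norm_eq_abs]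
  have hhcond_int : Integrable (h * μ[g | m']) μ := by
    have hasm : AEStronglyMeasurable (h * μ[g | m']) μ := by
      exact (hh_meas.mul (stronglyMeasurable_condExp.mono hm').measurable).aestronglyMeasurable
    refine (integrable_condExp (f := g) (m := m')).norm.mono' hasm ?_
    filter_upwards [hh_nonneg, hh_le_one] with ω h0 h1
    rw [Pi.mul_apply, Real.norm_eq_abs, abs_mul]
    calc |h ω| * |(μ[g | m']) ω| ≤ 1 * |(μ[g | m']) ω| := by
          apply mul_le_mul_of_nonneg_right _ (abs_nonneg _)
          rw [abs_of_nonneg h0]; exact h1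
      _ = ‖(μ[g | m']) ω‖ := by rw [one_mul, Real.norm_eq_abs]
  have hprod : (h * μ[g | m']) =ᵐ[μ] μ[fun ω => Δ ω * g ω | m'] := by
    refine ae_eq_condExp_of_forall_setIntegral_eq hm' hΔg_int
      (fun s _ _ => hhcond_int.integrableOn) (fun s hs _ => ?_)
      ((hh_meas'.stronglyMeasurable.mul
        (stronglyMeasurable_condExp (f := g))).aestronglyMeasurable)
    have hsΩ : MeasurableSet s := hm' s hs
    have hpull : μ[h * g | m'] =ᵐ[μ] h * μ[g | m'] :=
      condExp_mul_of_stronglyMeasurable_left (Measurable.stronglyMeasurable hh_meas') hhg_int hfint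
    calc ∫ ω in s, (h * μ[g | m']) ω ∂μ
        = ∫ ω in s, (μ[h * g | m']) ω ∂μ := by
          refine setIntegral_congr_ae hsΩ ?_
          filter_upwards [hpull] with ω h1 _
          rw [h1]
      _ = ∫ ω in s, (h * g) ω ∂μ := setIntegral_condExp hm' hhg_int hs
      _ = ∫ ω in s, Δ ω * g ω ∂μ := (key2 s hs).symm
  -- conclude m ∘ V = μ[g | m'] a.e.
  have hfinal : (fun ω => m (V ω)) =ᵐ[μ] μ[g | m'] := by
    filter_upwards [hreg, hprod.symm, hpos] with ω h1 h2 h3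
    exact mul_left_cancel₀ (ne_of_gt h3) (h1.trans h2)
  calc ∫ ω, m (V ω) ∂μ = ∫ ω, (μ[g | m']) ω ∂μ := integral_congr_ae hfinal
    _ = ∫ ω, g ω ∂μ := integral_condExp hm'


/-- Alternative representation of a full-data mean under coarsening at random: if
`Δ ⟂ X | σ(V)`, `π₀∘V` is a version of `μ[Δ | σ(V)]` with `π₀∘V > 0` a.e., and
`(π₀∘V)·(m∘V)` is a version of `μ[Δ·f(X) | σ(V)]` (so `m` is a version of the regression
`E[f(X) | Δ = 1, V]`), then `∫ m(V) dμ = ∫ f(X) dμ` whenever both are integrable. -/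
theorem eee_representation_of_car {Ω 𝒱 𝒳 : Type*}
    {mΩ : MeasurableSpace Ω} [StandardBorelSpace Ω]
    [MeasurableSpace 𝒱] [MeasurableSpace 𝒳]
    (μ : Measure Ω) [IsProbabilityMeasure μ]
    (Δ : Ω → ℝ) (hΔ : Measurable Δ) (hΔ01 : ∀ ω, Δ ω = 0 ∨ Δ ω = 1)
    (V : Ω → 𝒱) (hV : Measurable V)
    (X : Ω → 𝒳) (hX : Measurable X)
    (π₀ m : 𝒱 → ℝ) (hπ₀ : Measurable π₀) (hm : Measurable m)
    (f : 𝒳 → ℝ) (hf : Measurable f)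
    (hCAR : CondIndepFun (MeasurableSpace.comap V inferInstance) hV.comap_le Δ X μ)
    (hver : (fun ω => π₀ (V ω)) =ᵐ[μ] μ[Δ | MeasurableSpace.comap V inferInstance])
    (hpos : ∀ᵐ ω ∂μ, 0 < π₀ (V ω))
    (hreg : (fun ω => π₀ (V ω) * m (V ω))
      =ᵐ[μ] μ[fun ω => Δ ω * f (X ω) | MeasurableSpace.comap V inferInstance])
    (hfint : Integrable (fun ω => f (X ω)) μ)
    (hmint : Integrable (fun ω => m (V ω)) μ) :
    ∫ ω, m (V ω) ∂μ = ∫ ω, f (X ω) ∂μ := by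
  refine eee_aux (MeasurableSpace.comap V inferInstance) μ hV.comap_le Δ hΔ hΔ01 V hV X hX
    π₀ m hπ₀ hm (hπ₀.comp fun s hs => ⟨s, hs, rfl⟩) f hf hCAR hver hpos hreg hfint hmint
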